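/- If in addition the sequence (a_k) is bounded below and the series ∑_{k=0}^∞ η_k converges, then the series ∑_{k=1}^∞ Δ_{l(k)−1}² converges; in particular Δ_{l(k)−1}² → 0 (and hence Δ_{l(k)−1} → 0) as k → ∞. -/

import Mathlib

open Filter

/-- If (a_k) is bounded below and ∑ η_k converges, then ∑_{k≥1} Δ_{l(k)−1}² converges;
  in particular Δ_{l(k)−1}² → 0 and Δ_{l(k)−1} → 0. -/
theorem stmt_2 (M : ℕ) (hM : 1 ≤ M)
    (a Δ η : ℕ → ℝ)
    (hΔ : ∀ k, 0 < Δ k) (hη : ∀ k, 0 < η k)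
    (hdec : ∀ k : ℕ,
      a (k + 1) ≤ (Finset.range (min k (M - 1) + 1)).sup'
          (Finset.nonempty_range_iff.mpr (Nat.succ_ne_zero _)) (fun j => a (k - j))
        + η k - (Δ k) ^ 2)
    (l : ℕ → ℕ)
    (hl_lb : ∀ k, 1 ≤ k → k * M - (M - 1) ≤ l k)
    (hl_ub : ∀ k, 1 ≤ k → l k ≤ k * M)
    (hl_max : ∀ k, 1 ≤ k →
      a (l k) = (Finset.range M).sup'
          (Finset.nonempty_range_iff.mpr (by omega)) (fun j => a (k * M - j)))
    (hbdd : ∃ C : ℝ, ∀ k, C ≤ a k)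
    (hsum : Summable η) :
    Summable (fun k : ℕ => (Δ (l (k + 1) - 1)) ^ 2)
      ∧ Tendsto (fun k : ℕ => (Δ (l (k + 1) - 1)) ^ 2) atTop (nhds 0)
      ∧ Tendsto (fun k : ℕ => Δ (l (k + 1) - 1)) atTop (nhds 0) := by
  obtain ⟨C, hC⟩ := hbdd
  -- within-block estimate
  have key : ∀ k, 1 ≤ k → ∀ i' : ℕ, i' < M →
      a (k*M + i' + 1) ≤ a (l k) + ∑ t ∈ Finset.range (i'+1), η (k*M + t)
        - (Δ (k*M + i'))^2 := by
    intro k hk i'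
    induction i' using Nat.strong_induction_on with
    | _ i' ih =>
      intro hi'
      have hkM : M ≤ k*M := Nat.le_mul_of_pos_left M hk
      have hdec' := hdec (k*M + i')
      have hmin : min (k*M + i') (M-1) = M-1 := by omega
      rw [hmin] at hdec'
      have hsup : (Finset.range (M-1+1)).sup'
          (Finset.nonempty_range_iff.mpr (Nat.succ_ne_zero _))
          (fun j => a (k*M + i' - j))
          ≤ a (l k) + ∑ t ∈ Finset.range i', η (k*M + t) := by
        apply Finset.sup'_le
        intro j hj
        rw [Finset.mem_range] at hj
        have hsum_nonneg : 0 ≤ ∑ t ∈ Finset.range i', η (k*M + t) :=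
          Finset.sum_nonneg fun t _ => (hη _).le
        by_cases hcase : i' ≤ j
        · have heq : k*M + i' - j = k*M - (j - i') := by omega
          rw [heq]
          have hle : a (k*M - (j - i')) ≤ a (l k) := by
            rw [hl_max k hk]
            exact Finset.le_sup' (fun t => a (k*M - t)) (Finset.mem_range.mpr (by omega))
          linarith
        · push_neg at hcase
          have h1 : k*M + i' - j = k*M + (i' - j - 1) + 1 := by omega
          rw [h1]
          have h2 := ih (i' - j - 1) (by omega) (by omega)
          have hΔ2 : 0 ≤ (Δ (k*M + (i' - j - 1)))^2 := sq_nonneg _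
          have hmono : ∑ t ∈ Finset.range (i' - j - 1 + 1), η (k*M+t)
              ≤ ∑ t ∈ Finset.range i', η (k*M+t) := by
            apply Finset.sum_le_sum_of_subset_of_nonneg
            · exact Finset.range_subset_range.mpr (by omega)
            · intro t _ _; exact (hη _).le
          linarith
      have hss : ∑ t ∈ Finset.range (i'+1), η (k*M+t)
          = ∑ t ∈ Finset.range i', η (k*M+t) + η (k*M+i') := Finset.sum_range_succ _ _
      rw [hss]
      calc a (k*M + i' + 1) ≤ _ := hdec'
      _ ≤ _ := by linarith
  -- block-to-block estimate
  have key2 : ∀ k, 1 ≤ k →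
      a (l (k+1)) + (Δ (l (k+1) - 1))^2 ≤ a (l k) + ∑ t ∈ Finset.range M, η (k*M+t) := by
    intro k hk
    have hlb := hl_lb (k+1) (by omega)
    have hub := hl_ub (k+1) (by omega)
    have hm : (k+1)*M = k*M + M := by ring
    have h1 : k*M + 1 ≤ l (k+1) := by omega
    have h2 : l (k+1) ≤ k*M + M := by omega
    set i' := l (k+1) - 1 - k*M with hi'
    have hiM : i' < M := by omega
    have h3 : l (k+1) = k*M + i' + 1 := by omega
    have h4 : l (k+1) - 1 = k*M + i' := by omega
    have hkey := key k hk i' hiM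
    rw [h4, h3]
    have hmono : ∑ t ∈ Finset.range (i'+1), η (k*M+t) ≤ ∑ t ∈ Finset.range M, η (k*M+t) :=
      Finset.sum_le_sum_of_subset_of_nonneg (Finset.range_subset_range.mpr (by omega))
        (fun t _ _ => (hη _).le)
    linarith
  set b : ℕ → ℝ := fun k => (Δ (l (k+1) - 1))^2 with hb
  set T : ℕ → ℝ := fun k => ∑ t ∈ Finset.range M, η ((k+1)*M + t) with hT
  -- telescoping
  have tele : ∀ N, ∑ k ∈ Finset.range N, b (k+1)
      ≤ a (l 1) - a (l (N+1)) + ∑ k ∈ Finset.range N, T k := by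
    intro N
    induction N with
    | zero => simp
    | succ N ihN =>
      rw [Finset.sum_range_succ, Finset.sum_range_succ]
      have h := key2 (N+1) (by omega)
      have hTN : T N = ∑ t ∈ Finset.range M, η ((N+1)*M+t) := rfl
      have hbN : b (N+1) = (Δ (l (N+1+1) - 1))^2 := rfl
      linarith [h]
  -- bound the η-sums by the tsum
  have htsum0 : (0:ℝ) ≤ ∑' n, η n := tsum_nonneg fun n => (hη n).le
  have hTbound : ∀ N, ∑ k ∈ Finset.range N, T k ≤ ∑' n, η n := by
    intro N
    have hdiv : ∀ k t : ℕ, t < M → ((k+1)*M + t)/M = k+1 := by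
      intro k t ht
      rw [add_comm, Nat.add_mul_div_right _ _ (by omega : 0 < M), Nat.div_eq_of_lt ht]
      omega
    have hrw : ∑ k ∈ Finset.range N, T k
        = ∑ p ∈ (Finset.range N ×ˢ Finset.range M).image (fun p => (p.1+1)*M + p.2),
            η p := by
      rw [Finset.sum_image]
      · rw [Finset.sum_product]
      · intro x hx y hy hxy
        simp only [Finset.mem_coe, Finset.mem_product, Finset.mem_range] at hx hy hxy
        have hx2 := hdiv x.1 x.2 hx.2
        have hy2 := hdiv y.1 y.2 hy.2
        have h1 : x.1 = y.1 := by rw [hxy] at hx2; omega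
        have h2 : x.2 = y.2 := by
          have : (x.1+1)*M = (y.1+1)*M := by rw [h1]
          omega
        exact Prod.ext h1 h2
    rw [hrw]
    exact Summable.sum_le_tsum _ (fun n _ => (hη n).le) hsum
  -- partial sums of b are uniformly bounded
  have hbnonneg : ∀ n, (0:ℝ) ≤ b n := fun n => sq_nonneg _
  have hbound : ∀ N, ∑ k ∈ Finset.range N, b k ≤ b 0 + (a (l 1) - C + ∑' n, η n) := by
    intro N
    cases N with
    | zero =>
      simp only [Finset.sum_range_zero]
      have := hC (l 1)
      have := hbnonneg 0
      linarith
    | succ N =>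
      rw [Finset.sum_range_succ']
      have h1 := tele N
      have h2 := hTbound N
      have h3 := hC (l (N+1))
      linarith
  have hsummable : Summable b :=
    summable_of_sum_range_le hbnonneg hbound
  have htend2 : Tendsto b atTop (nhds 0) := hsummable.tendsto_atTop_zero
  refine ⟨hsummable, htend2, ?_⟩
  have h3 : Tendsto (fun k => Real.sqrt (b k)) atTop (nhds (Real.sqrt 0)) :=
    (Real.continuous_sqrt.tendsto 0).comp htend2
  have heq : (fun k => Real.sqrt (b k)) = fun k => Δ (l (k+1) - 1) := by
    funext k
    exact Real.sqrt_sq (hΔ _).le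
  rw [heq, Real.sqrt_zero] at h3
  exact h3
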